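/- Let H be a separable Hilbert space, K ∈ C_m(H) for an integer m > 1 (Schatten class), and define R_m(K) := (I + K)·exp(Σ_{j=1}^{m−1} (−K)^j / j) − I. Then R_m(K) belongs to the trace class C₁(H). -/

import Mathlib

noncomputable section

def sVal {H : Type*} [NormedAddCommGroup H] [InnerProductSpace ℂ H]
    (n : ℕ) (T : H →L[ℂ] H) : ℝ :=
  sInf {c : ℝ | ∃ F : H →L[ℂ] H,
    FiniteDimensional ℂ (LinearMap.range (F : H →ₗ[ℂ] H)) ∧
    Module.finrank ℂ (LinearMap.range (F : H →ₗ[ℂ] H)) ≤ n ∧ ‖T - F‖ ≤ c}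

namespace SValAux

lemma le_mul_sInf {x d : ℝ} {S : Set ℝ} (hS : S.Nonempty) (hS0 : ∀ c ∈ S, 0 ≤ c)
    (hd : 0 ≤ d) (h : ∀ c ∈ S, x ≤ c * d) : x ≤ sInf S * d := by
  rcases eq_or_lt_of_le hd with h0 | h0
  · obtain ⟨c, hc⟩ := hS
    have := h c hc
    simp only [← h0, mul_zero] at this ⊢
    exact this
  · rw [← div_le_iff₀ h0]
    exact le_csInf hS fun c hc => (div_le_iff₀ h0).mpr (h c hc)

variable {H : Type*} [NormedAddCommGroup H] [InnerProductSpace ℂ H]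

def SSet (n : ℕ) (T : H →L[ℂ] H) : Set ℝ :=
  {c : ℝ | ∃ F : H →L[ℂ] H,
    FiniteDimensional ℂ (LinearMap.range (F : H →ₗ[ℂ] H)) ∧
    Module.finrank ℂ (LinearMap.range (F : H →ₗ[ℂ] H)) ≤ n ∧ ‖T - F‖ ≤ c}

lemma sVal_def (n : ℕ) (T : H →L[ℂ] H) : sVal n T = sInf (SSet n T) := rfl

lemma norm_mem (n : ℕ) (T : H →L[ℂ] H) : ‖T‖ ∈ SSet n T := by
  refine ⟨0, ?_, ?_, by simp⟩
  · rw [ContinuousLinearMap.coe_zero, LinearMap.range_zero]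
    infer_instance
  · rw [ContinuousLinearMap.coe_zero, LinearMap.range_zero, finrank_bot]
    exact Nat.zero_le _

lemma nonempty (n : ℕ) (T : H →L[ℂ] H) : (SSet n T).Nonempty := ⟨‖T‖, norm_mem n T⟩

lemma nonneg_mem {n : ℕ} {T : H →L[ℂ] H} {c : ℝ} (hc : c ∈ SSet n T) : 0 ≤ c := by
  obtain ⟨F, -, -, h⟩ := hc
  exact le_trans (norm_nonneg _) h

lemma bddBelow (n : ℕ) (T : H →L[ℂ] H) : BddBelow (SSet n T) :=
  ⟨0, fun _ hc => nonneg_mem hc⟩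

lemma sVal_nonneg (n : ℕ) (T : H →L[ℂ] H) : 0 ≤ sVal n T :=
  Real.sInf_nonneg fun _ hc => nonneg_mem hc

lemma sVal_antitone {n n' : ℕ} (h : n ≤ n') (T : H →L[ℂ] H) : sVal n' T ≤ sVal n T := by
  apply csInf_le_csInf (bddBelow n' T) (nonempty n T)
  rintro c ⟨F, h1, h2, h3⟩
  exact ⟨F, h1, le_trans h2 h, h3⟩

lemma sVal_le_norm (n : ℕ) (T : H →L[ℂ] H) : sVal n T ≤ ‖T‖ :=
  csInf_le (bddBelow n T) (norm_mem n T)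

lemma mem_mul {j k : ℕ} {A B : H →L[ℂ] H} {c d : ℝ}
    (hc : c ∈ SSet j A) (hd : d ∈ SSet k B) : c * d ∈ SSet (j + k) (A * B) := by
  obtain ⟨F, hF1, hF2, hF3⟩ := hc
  obtain ⟨G, hG1, hG2, hG3⟩ := hd
  have hW : LinearMap.range ((F * B + (A - F) * G : H →L[ℂ] H) : H →ₗ[ℂ] H) ≤
      LinearMap.range (F : H →ₗ[ℂ] H) ⊔
        Submodule.map ((A - F : H →L[ℂ] H) : H →ₗ[ℂ] H)
          (LinearMap.range (G : H →ₗ[ℂ] H)) := by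
    rintro x ⟨y, rfl⟩
    have hy : ((F * B + (A - F) * G : H →L[ℂ] H) : H →ₗ[ℂ] H) y
        = F (B y) + (A - F) (G y) := by
      simp [ContinuousLinearMap.mul_apply]
    rw [hy]
    exact Submodule.add_mem_sup ⟨B y, rfl⟩ ⟨G y, ⟨y, rfl⟩, rfl⟩
  haveI : FiniteDimensional ℂ
      (Submodule.map ((A - F : H →L[ℂ] H) : H →ₗ[ℂ] H) (LinearMap.range (G : H →ₗ[ℂ] H))) :=
    Module.Finite.map _ _
  refine ⟨F * B + (A - F) * G, ?_, ?_, ?_⟩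
  case _ => exact Submodule.finiteDimensional_of_le hW
  case _ =>
    refine le_trans (Submodule.finrank_mono hW) ?_
    refine le_trans (Submodule.finrank_add_le_finrank_add_finrank _ _) ?_
    exact add_le_add hF2 (le_trans (Submodule.finrank_map_le _ _) hG2)
  · have key : A * B - (F * B + (A - F) * G) = (A - F) * (B - G) := by noncomm_ring
    rw [key]
    exact le_trans (norm_mul_le _ _)
      (mul_le_mul hF3 hG3 (norm_nonneg _) (le_trans (norm_nonneg _) hF3))

lemma sVal_mul_le (j k : ℕ) (A B : H →L[ℂ] H) :
    sVal (j + k) (A * B) ≤ sVal j A * sVal k B := by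
  have h1 : ∀ d ∈ SSet k B, sVal (j + k) (A * B) ≤ d * sVal j A := fun d hd => by
    rw [mul_comm]
    exact le_mul_sInf (nonempty j A) (fun _ hc => nonneg_mem hc) (nonneg_mem hd)
      (fun c hc => csInf_le (bddBelow _ _) (mem_mul hc hd))
  rw [mul_comm]
  exact le_mul_sInf (nonempty k B) (fun _ hc => nonneg_mem hc) (sVal_nonneg j A) h1

lemma sVal_pow_le (M q : ℕ) (K : H →L[ℂ] H) :
    sVal (M * q) (K ^ M) ≤ (sVal q K) ^ M := by
  induction M with
  | zero => simpa using le_trans (sVal_le_norm 0 1) ContinuousLinearMap.norm_id_le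
  | succ M ih =>
      have h1 : (M + 1) * q = q + M * q := by ring
      have h2 : K ^ (M + 1) = K * K ^ M := pow_succ' K M
      rw [h1, h2, pow_succ, mul_comm (sVal q K ^ M)]
      exact le_trans (sVal_mul_le q (M * q) K (K ^ M))
        (mul_le_mul_of_nonneg_left ih (sVal_nonneg q K))

end SValAux


open NormedSpace in
/-- Derivative of `t ↦ exp (∑ j in s, φ j t • K ^ j)`. -/
lemma hasDerivAt_exp_sum {A : Type*} [NormedRing A] [NormedAlgebra ℂ A] [CompleteSpace A]
    (s : Finset ℕ) (K : A) (φ φd : ℕ → ℂ → ℂ) (t : ℂ)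
    (hφ : ∀ j ∈ s, HasDerivAt (φ j) (φd j t) t) :
    HasDerivAt (fun t : ℂ => exp (∑ j ∈ s, φ j t • K ^ j))
      (exp (∑ j ∈ s, φ j t • K ^ j) * ∑ j ∈ s, φd j t • K ^ j) t := by
  classical
  induction s using Finset.induction_on with
  | empty => simpa using hasDerivAt_const t (exp (0 : A))
  | insert a s ha ih =>
      have hcomm : ∀ u : ℂ, Commute (φ a u • K ^ a) (∑ j ∈ s, φ j u • K ^ j) :=
        fun u => Commute.sum_right _ _ _ fun j _ =>
          ((Commute.pow_pow_self K a j).smul_left _).smul_right _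
      have hsplit : ∀ u : ℂ, exp (∑ j ∈ insert a s, φ j u • K ^ j)
          = exp (φ a u • K ^ a) * exp (∑ j ∈ s, φ j u • K ^ j) := by
        intro u
        rw [Finset.sum_insert ha, exp_add_of_commute_of_mem_ball (𝕂 := ℂ) (hcomm u)
          ((expSeries_radius_eq_top ℂ A).symm ▸ edist_lt_top _ _)
          ((expSeries_radius_eq_top ℂ A).symm ▸ edist_lt_top _ _)]
      have h1 : HasDerivAt (fun u : ℂ => exp (φ a u • K ^ a))
          (φd a t • (exp (φ a t • K ^ a) * K ^ a)) t := by
        have := (hasDerivAt_exp_smul_const (𝕂 := ℂ) (K ^ a) (φ a t)).scomp t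
          (hφ a (Finset.mem_insert_self a s))
        exact this
      have h2 := ih fun j hj => hφ j (Finset.mem_insert_of_mem hj)
      have h3 : HasDerivAt
        (fun u : ℂ => exp (φ a u • K ^ a) * exp (∑ j ∈ s, φ j u • K ^ j)) _ t := h1.mul h2
      have heq : (fun u : ℂ => exp (φ a u • K ^ a) * exp (∑ j ∈ s, φ j u • K ^ j))
          = fun u : ℂ => exp (∑ j ∈ insert a s, φ j u • K ^ j) := by
        funext u; rw [hsplit u]
      rw [heq] at h3
      convert h3 using 1
      rw [hsplit t, Finset.sum_insert ha]
      set E1 := exp (φ a t • K ^ a)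
      set E2 := exp (∑ j ∈ s, φ j t • K ^ j)
      have hKE2 : Commute (K ^ a) E2 :=
        (Commute.sum_right _ _ _ fun j _ =>
          ((Commute.pow_pow_self K a j).smul_right _)).exp_right
      rw [mul_add]
      congr 1
      · -- E1 * E2 * (φd a t • K ^ a) = (φd a t • (E1 * K^a)) * E2
        rw [smul_mul_assoc, mul_smul_comm, mul_assoc, ← hKE2.eq, ← mul_assoc]
      · rw [mul_assoc]


open NormedSpace in
lemma exists_factor {A : Type*} [NormedRing A] [NormedAlgebra ℂ A] [CompleteSpace A]
    (n : ℕ) (hn : 1 ≤ n) (K : A) :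
    ∃ B : A, (1 + K) * exp (∑ j ∈ Finset.Icc 1 n, ((j : ℂ))⁻¹ • (-K) ^ j) - 1
      = K ^ (n + 1) * B := by
  classical
  set φ : ℕ → ℂ → ℂ := fun j u => (j : ℂ)⁻¹ * (-u) ^ j with hφdef
  set φd : ℕ → ℂ → ℂ := fun j u => -(-u) ^ (j - 1) with hφddef
  set S : ℂ → A := fun u => ∑ j ∈ Finset.Icc 1 n, φ j u • K ^ j with hSdef
  set V : ℂ → A := fun u => ∑ j ∈ Finset.Icc 1 n, φd j u • K ^ j with hVdef
  -- derivatives of the coefficients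
  have hφd : ∀ j ∈ Finset.Icc 1 n, ∀ u : ℂ, HasDerivAt (φ j) (φd j u) u := by
    intro j hj u
    have hj1 : 1 ≤ j := (Finset.mem_Icc.mp hj).1
    have hjne : (j : ℂ) ≠ 0 := Nat.cast_ne_zero.mpr (by omega)
    have h1 : HasDerivAt (fun u : ℂ => -u) (-1) u := (hasDerivAt_id u).neg
    have h2 := (hasDerivAt_pow j (-u)).comp u h1
    have h3 := h2.const_mul ((j : ℂ)⁻¹)
    refine h3.congr_deriv ?_
    have hj' : j - 1 + 1 = j := Nat.succ_pred_eq_of_pos hj1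
    have hh : ((j:ℂ))⁻¹ * ((j:ℂ) * (-u) ^ (j - 1) * -1)
        = -(((j:ℂ))⁻¹ * (j:ℂ) * (-u) ^ (j - 1)) := by ring
    rw [hh, inv_mul_cancel₀ hjne, one_mul]
  -- derivative of exp ∘ S
  have hE : ∀ u : ℂ, HasDerivAt (fun u : ℂ => exp (S u)) (exp (S u) * V u) u :=
    fun u => hasDerivAt_exp_sum (Finset.Icc 1 n) K φ φd u (fun j hj => hφd j hj u)
  -- commutation facts
  have hcommSE : ∀ u : ℂ, ∀ x : A, Commute x (S u) → Commute x (exp (S u)) :=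
    fun u x h => h.exp_right
  have hVS : ∀ u : ℂ, Commute (V u) (S u) := fun u =>
    Commute.sum_left _ _ _ fun i _ => Commute.sum_right _ _ _ fun j _ =>
      ((Commute.pow_pow_self K i j).smul_left _).smul_right _
  -- the key polynomial identity
  have hpoly : ∀ u : ℂ, K + (1 + u • K) * V u = ((-1 : ℂ) ^ n * u ^ n) • K ^ (n + 1) := by
    intro u
    set v : ℕ → A := fun j => (-(-u) ^ (j - 1)) • K ^ j with hvdef
    have hstep : ∀ j ∈ Finset.Icc 1 n, (1 + u • K) * (φd j u • K ^ j) = v j - v (j + 1) := by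
      intro j hj
      have hj1 : 1 ≤ j := (Finset.mem_Icc.mp hj).1
      have hj' : j - 1 + 1 = j := Nat.succ_pred_eq_of_pos hj1
      have key : (1 + u • K) * (φd j u • K ^ j)
          = φd j u • K ^ j + (u * φd j u) • K ^ (j + 1) := by
        rw [add_mul, one_mul]
        congr 1
        rw [smul_mul_assoc, mul_smul_comm, smul_smul, ← pow_succ']
      have h2 : u * φd j u = (-u) ^ j := by
        conv_rhs => rw [← hj']
        rw [pow_succ]
        simp only [hφddef]
        ring
      rw [key, h2]
      simp only [hvdef, hφddef, Nat.add_sub_cancel, sub_eq_add_neg, neg_smul, neg_neg]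
    have hsum : (1 + u • K) * V u = v 1 - v (n + 1) := by
      rw [hVdef, Finset.mul_sum, Finset.sum_congr rfl hstep, ← Finset.Ico_add_one_right_eq_Icc,
        Finset.sum_Ico_eq_sum_range]
      conv_rhs => rw [Nat.add_comm n 1]
      exact Finset.sum_range_sub' (fun i => v (1 + i)) n
    have hv1 : v 1 = -K := by simp [hvdef]
    have hvn : v (n + 1) = -(((-1 : ℂ) ^ n * u ^ n) • K ^ (n + 1)) := by
      have hnp : (-u) ^ n = (-1 : ℂ) ^ n * u ^ n := by rw [neg_pow]
      simp only [hvdef, Nat.add_sub_cancel, hnp, neg_smul]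
    rw [hsum, hv1, hvn]
    abel
  -- ψ and its derivative
  set ψ : ℂ → A := fun u => (1 + u • K) * exp (S u) - 1 with hψdef
  have hψ : ∀ u : ℂ, HasDerivAt ψ (K ^ (n + 1) * (((-1 : ℂ) ^ n * u ^ n) • exp (S u))) u := by
    intro u
    have h4 : HasDerivAt (fun u : ℂ => 1 + u • K) K u := by
      simpa using ((hasDerivAt_id u).smul_const K).const_add 1
    have h5 := (h4.mul (hE u)).sub_const (1 : A)
    refine h5.congr_deriv (Eq.symm ?_)
    have hVE : V u * exp (S u) = exp (S u) * V u := (hcommSE u _ (hVS u)).eq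
    calc K ^ (n + 1) * (((-1 : ℂ) ^ n * u ^ n) • exp (S u))
        = (((-1 : ℂ) ^ n * u ^ n) • K ^ (n + 1)) * exp (S u) := by
          rw [smul_mul_assoc, mul_smul_comm]
      _ = (K + (1 + u • K) * V u) * exp (S u) := by rw [hpoly u]
      _ = K * exp (S u) + (1 + u • K) * (exp (S u) * V u) := by
          rw [add_mul, mul_assoc, hVE]
  -- FTC along [0,1]
  have hScont : Continuous fun x : ℝ => S ((x : ℝ) : ℂ) := by
    apply continuous_finset_sum
    intro j _
    exact Continuous.smul (by fun_prop) continuous_const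
  have hEcont : Continuous fun x : ℝ => exp (S ((x : ℝ) : ℂ)) :=
    (continuous_iff_continuousAt.2 fun x => (exp_analytic (𝕂 := ℂ) x).continuousAt).comp hScont
  set g : ℝ → A := fun x => ((-1 : ℂ) ^ n * ((x : ℂ)) ^ n) • exp (S ((x : ℝ) : ℂ))
    with hgdef
  have hgcont : Continuous g := Continuous.smul (by fun_prop) hEcont
  have hfderiv : ∀ x ∈ Set.uIcc (0 : ℝ) 1,
      HasDerivAt (fun x : ℝ => ψ ((x : ℝ) : ℂ)) (K ^ (n + 1) * g x) x := by
    intro x _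
    have := HasDerivAt.scomp (𝕜 := ℝ) (𝕜' := ℂ) x (hψ ((x : ℝ) : ℂ))
      Complex.ofRealCLM.hasDerivAt
    simp [hgdef] at this ⊢
    exact this
  have hint : IntervalIntegrable (fun x : ℝ => K ^ (n + 1) * g x)
      MeasureTheory.volume 0 1 :=
    (Continuous.intervalIntegrable (by exact continuous_const.mul hgcont) 0 1)
  have hFTC := intervalIntegral.integral_eq_sub_of_hasDerivAt hfderiv hint
  have hpull := (ContinuousLinearMap.mul ℂ A (K ^ (n + 1))).intervalIntegral_comp_comm
    (μ := MeasureTheory.volume) (hgcont.intervalIntegrable 0 1)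
  refine ⟨∫ x in (0:ℝ)..1, g x, ?_⟩
  have hS1 : S 1 = ∑ j ∈ Finset.Icc 1 n, ((j : ℂ))⁻¹ • (-K) ^ j := by
    rw [hSdef]
    refine Finset.sum_congr rfl fun j _ => ?_
    have hK : -K = (-1 : ℂ) • K := by simp
    rw [hK, smul_pow, smul_smul]
  have hψ1 : ψ 1 = (1 + K) * exp (∑ j ∈ Finset.Icc 1 n, ((j : ℂ))⁻¹ • (-K) ^ j) - 1 := by
    simp only [hψdef]
    rw [hS1, one_smul]
  have hψ0 : ψ 0 = 0 := by
    simp only [hψdef, hSdef, hφdef]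
    rw [Finset.sum_eq_zero, exp_zero]
    · simp
    · intro j hj
      have hj1 : 1 ≤ j := (Finset.mem_Icc.mp hj).1
      simp [zero_pow (by omega : j ≠ 0)]
  rw [← hψ1]
  calc ψ 1 = ψ 1 - ψ 0 := by rw [hψ0, sub_zero]
    _ = ∫ x in (0:ℝ)..1, K ^ (n + 1) * g x := hFTC.symm
    _ = K ^ (n + 1) * ∫ x in (0:ℝ)..1, g x := by
        simpa [ContinuousLinearMap.mul_apply'] using hpull


/-- If `K` belongs to the Schatten class `C_m(H)` for an integer `m > 1`, then
`R_m(K) = (I + K) exp(∑_{j=1}^{m−1} (−K)^j / j) − I` is of trace class. -/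
theorem regularized_remainder_traceClass {H : Type*} [NormedAddCommGroup H]
    [InnerProductSpace ℂ H] [CompleteSpace H]
    (m : ℕ) (hm : 1 < m) (K : H →L[ℂ] H)
    (hK : Summable fun n : ℕ => (sVal n K) ^ (m : ℝ)) :
    Summable fun n : ℕ =>
      sVal n ((1 + K) * NormedSpace.exp
        (∑ j ∈ Finset.Icc 1 (m - 1), ((j : ℂ))⁻¹ • (-K) ^ j) - 1) := by
  obtain ⟨B, hB⟩ := exists_factor (m - 1) (by omega) K
  have hm1 : m - 1 + 1 = m := by omega
  rw [hm1] at hB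
  have hK' : Summable fun n : ℕ => (sVal n K) ^ m := by
    simpa only [Real.rpow_natCast] using hK
  have hle : ∀ n : ℕ, sVal n (K ^ m * B) ≤ (sVal (n / m) K) ^ m * ‖B‖ := by
    intro n
    have h1 : m * (n / m) ≤ n := Nat.mul_div_le n m
    calc sVal n (K ^ m * B) ≤ sVal (m * (n / m)) (K ^ m * B) :=
          SValAux.sVal_antitone h1 _
      _ = sVal (m * (n / m) + 0) (K ^ m * B) := by rw [Nat.add_zero]
      _ ≤ sVal (m * (n / m)) (K ^ m) * sVal 0 B := SValAux.sVal_mul_le _ 0 _ _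
      _ ≤ (sVal (n / m) K) ^ m * ‖B‖ :=
          mul_le_mul (SValAux.sVal_pow_le m (n / m) K) (SValAux.sVal_le_norm 0 B)
            (SValAux.sVal_nonneg 0 B) (pow_nonneg (SValAux.sVal_nonneg _ K) m)
  haveI : NeZero m := ⟨by omega⟩
  have h2 : Summable fun p : ℕ × Fin m => (sVal p.1 K) ^ m := by
    have := Summable.mul_of_nonneg hK' (Summable.of_finite (f := fun _ : Fin m => (1 : ℝ)))
      (fun n => pow_nonneg (SValAux.sVal_nonneg n K) m) (fun _ => zero_le_one)
    simpa using this
  have h3 : Summable fun n : ℕ => (sVal (n / m) K) ^ m := by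
    have := (Equiv.summable_iff (Nat.divModEquiv m)).2 h2
    exact this
  have hmaj : Summable fun n : ℕ => (sVal (n / m) K) ^ m * ‖B‖ := h3.mul_right _
  rw [hB]
  exact Summable.of_nonneg_of_le (fun n => SValAux.sVal_nonneg n _) hle hmaj

end
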